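/- Let F : F_{2^n} → F_{2^n}. Then 2^n · Σ_{v_1,v_2 ∈ F_{2^n}} Σ_{(x_1,x_2,x_3): v_1 x_1 + v_2 x_2 + (v_1+v_2) x_3 = 0} (−1)^{tr_n(v_1 F(x_1) + v_2 F(x_2) + (v_1+v_2) F(x_3))} − Σ_{v_1,v_2} W_F(0,v_1)·W_F(0,v_2)·W_F(0,v_1+v_2) + 2^{n+2}·Σ_{v ≠ 0} W_F(0,v)^2 − 2^{4n+2} + 2^{3n+2} ≥ 0, with equality if and only if F is an o-polynomial. -/

import Mathlib

open scoped Classical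
open Finset

noncomputable instance (n : ℕ) : Fintype (GaloisField 2 n) := Fintype.ofFinite _

/-- The absolute trace from `GF(2^n)` to `GF(2)`. -/
noncomputable def tr (n : ℕ) (x : GaloisField 2 n) : ZMod 2 :=
  Algebra.trace (ZMod 2) (GaloisField 2 n) x

/-- The Walsh transform of `F` at `(u, v)`. -/
noncomputable def W (n : ℕ) (F : GaloisField 2 n → GaloisField 2 n)
    (u v : GaloisField 2 n) : ℤ :=
  ∑ x : GaloisField 2 n, (-1 : ℤ) ^ (tr n (v * F x) + tr n (u * x)).val

/-- `F` is an o-polynomial: for every nonzero `b` and every `a`, the equation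
`F x + b * x = a` has 0 or 2 solutions. -/
def IsOPoly (n : ℕ) (F : GaloisField 2 n → GaloisField 2 n) : Prop :=
  ∀ b : GaloisField 2 n, b ≠ 0 → ∀ a : GaloisField 2 n,
    Nat.card {x : GaloisField 2 n // F x + b * x = a} = 0 ∨
    Nat.card {x : GaloisField 2 n // F x + b * x = a} = 2

noncomputable def ch (n : ℕ) (x : GaloisField 2 n) : ℤ := (-1) ^ (tr n x).val

lemma pow_val_add (a b : ZMod 2) : (-1:ℤ)^((a+b).val) = (-1:ℤ)^a.val * (-1:ℤ)^b.val := by revert a b; decide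

lemma ch_add (n : ℕ) (x y : GaloisField 2 n) : ch n (x + y) = ch n x * ch n y := by
  unfold ch tr
  rw [map_add, pow_val_add]

lemma ch_zero (n : ℕ) : ch n 0 = 1 := by
  unfold ch tr; rw [map_zero]; rfl

lemma card_K (n : ℕ) (hn : n ≠ 0) : Fintype.card (GaloisField 2 n) = 2 ^ n := by
  rw [← Nat.card_eq_fintype_card, GaloisField.card 2 n hn]

lemma ortho (n : ℕ) (hn : n ≠ 0) (w : GaloisField 2 n) :
    (∑ v : GaloisField 2 n, ch n (v * w)) = if w = 0 then ((2:ℤ)^n) else 0 := by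
  split_ifs with h
  · subst h
    simp only [mul_zero, ch_zero]
    rw [Finset.sum_const, card_univ, card_K n hn]
    norm_num
  · obtain ⟨y, hy⟩ := Algebra.trace_surjective (ZMod 2) (GaloisField 2 n) 1
    set v0 := y * w⁻¹ with hv0def
    have hv0 : ch n (v0 * w) = -1 := by
      have hw : v0 * w = y := by
        rw [hv0def, mul_assoc, inv_mul_cancel₀ h, mul_one]
      rw [hw]
      unfold ch tr
      rw [hy]; rfl
    have key : ∑ v : GaloisField 2 n, ch n ((v + v0) * w) = ∑ v : GaloisField 2 n, ch n (v * w) :=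
      Fintype.sum_equiv (Equiv.addRight v0) _ _ (fun v => rfl)
    have key2 : ∀ v : GaloisField 2 n, ch n ((v + v0) * w) = ch n (v * w) * (-1) := by
      intro v
      rw [add_mul, ch_add, hv0]
    simp only [key2] at key
    rw [← Finset.sum_mul] at key
    linarith


/-- number of solutions of F x + u x = a -/
noncomputable def Nc (n : ℕ) (F : GaloisField 2 n → GaloisField 2 n)
    (u a : GaloisField 2 n) : ℕ :=
  (univ.filter fun x => F x + u * x = a).card

lemma fiber (n : ℕ) (F : GaloisField 2 n → GaloisField 2 n) (u : GaloisField 2 n)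
    (g : GaloisField 2 n → ℤ) :
    ∑ x : GaloisField 2 n, g (F x + u * x) = ∑ a : GaloisField 2 n, (Nc n F u a : ℤ) * g a := by
  rw [← Finset.sum_fiberwise' univ (fun x => F x + u * x) g]
  refine Finset.sum_congr rfl fun a _ => ?_
  rw [Finset.sum_const, Nc, nsmul_eq_mul]

lemma sum_Nc (n : ℕ) (hn : n ≠ 0) (F : GaloisField 2 n → GaloisField 2 n) (u : GaloisField 2 n) :
    ∑ a : GaloisField 2 n, (Nc n F u a : ℤ) = 2 ^ n := by
  have := fiber n F u (fun _ => (1:ℤ))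
  simp only [mul_one] at this
  rw [← this, Finset.sum_const, card_univ, ← Nat.card_eq_fintype_card, GaloisField.card 2 n hn]
  norm_num

lemma addeq {n : ℕ} (a b : GaloisField 2 n) : a + b = 0 ↔ a = b := by
  rw [CharTwo.add_eq_iff_eq_add, zero_add]

lemma Hval (n : ℕ) (hn : n ≠ 0) (F : GaloisField 2 n → GaloisField 2 n)
    (u a : GaloisField 2 n) :
    ∑ v : GaloisField 2 n, (∑ x : GaloisField 2 n, ch n (v * (F x + u * x))) * ch n (v * a)
      = (2:ℤ) ^ n * (Nc n F u a : ℤ) := by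
  have step1 : ∀ v : GaloisField 2 n,
      (∑ x : GaloisField 2 n, ch n (v * (F x + u * x))) * ch n (v * a)
        = ∑ x : GaloisField 2 n, ch n (v * ((F x + u * x) + a)) := by
    intro v
    rw [Finset.sum_mul]
    refine Finset.sum_congr rfl fun x _ => ?_
    rw [← ch_add]
    congr 1
    ring
  simp only [step1]
  rw [Finset.sum_comm]
  have step2 : ∀ x : GaloisField 2 n,
      (∑ v : GaloisField 2 n, ch n (v * ((F x + u * x) + a)))
        = if F x + u * x = a then (2:ℤ)^n else 0 := by
    intro x
    rw [ortho n hn, addeq]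
  simp only [step2]
  rw [← Finset.sum_filter, Finset.sum_const, Nc, nsmul_eq_mul]
  push_cast
  ring

lemma cube (n : ℕ) (hn : n ≠ 0) (F : GaloisField 2 n → GaloisField 2 n) (u : GaloisField 2 n) :
    (∑ v₁ : GaloisField 2 n, ∑ v₂ : GaloisField 2 n,
      (∑ x : GaloisField 2 n, ch n (v₁ * (F x + u * x))) *
      (∑ x : GaloisField 2 n, ch n (v₂ * (F x + u * x))) *
      (∑ x : GaloisField 2 n, ch n ((v₁ + v₂) * (F x + u * x))))
      = ((2:ℤ) ^ n) ^ 2 * ∑ a : GaloisField 2 n, (Nc n F u a : ℤ) ^ 3 := by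
  have step1 : ∀ v₁ v₂ : GaloisField 2 n,
      (∑ x : GaloisField 2 n, ch n (v₁ * (F x + u * x))) *
      (∑ x : GaloisField 2 n, ch n (v₂ * (F x + u * x))) *
      (∑ x : GaloisField 2 n, ch n ((v₁ + v₂) * (F x + u * x)))
      = ∑ z : GaloisField 2 n,
          ((∑ x : GaloisField 2 n, ch n (v₁ * (F x + u * x))) * ch n (v₁ * (F z + u * z))) *
          ((∑ x : GaloisField 2 n, ch n (v₂ * (F x + u * x))) * ch n (v₂ * (F z + u * z))) := by
    intro v₁ v₂
    rw [Finset.mul_sum]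
    refine Finset.sum_congr rfl fun z _ => ?_
    have : ch n ((v₁ + v₂) * (F z + u * z))
        = ch n (v₁ * (F z + u * z)) * ch n (v₂ * (F z + u * z)) := by
      rw [← ch_add]; congr 1; ring
    rw [this]; ring
  simp only [step1]
  have step2 :
      (∑ v₁ : GaloisField 2 n, ∑ v₂ : GaloisField 2 n, ∑ z : GaloisField 2 n,
          ((∑ x : GaloisField 2 n, ch n (v₁ * (F x + u * x))) * ch n (v₁ * (F z + u * z))) *
          ((∑ x : GaloisField 2 n, ch n (v₂ * (F x + u * x))) * ch n (v₂ * (F z + u * z))))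
      = ∑ z : GaloisField 2 n,
          (∑ v₁ : GaloisField 2 n,
            (∑ x : GaloisField 2 n, ch n (v₁ * (F x + u * x))) * ch n (v₁ * (F z + u * z))) *
          (∑ v₂ : GaloisField 2 n,
            (∑ x : GaloisField 2 n, ch n (v₂ * (F x + u * x))) * ch n (v₂ * (F z + u * z))) := by
    have swap1 : ∀ v₁ : GaloisField 2 n,
        (∑ v₂ : GaloisField 2 n, ∑ z : GaloisField 2 n,
          ((∑ x : GaloisField 2 n, ch n (v₁ * (F x + u * x))) * ch n (v₁ * (F z + u * z))) *
          ((∑ x : GaloisField 2 n, ch n (v₂ * (F x + u * x))) * ch n (v₂ * (F z + u * z))))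
        = ∑ z : GaloisField 2 n, ∑ v₂ : GaloisField 2 n,
          ((∑ x : GaloisField 2 n, ch n (v₁ * (F x + u * x))) * ch n (v₁ * (F z + u * z))) *
          ((∑ x : GaloisField 2 n, ch n (v₂ * (F x + u * x))) * ch n (v₂ * (F z + u * z))) :=
      fun v₁ => Finset.sum_comm
    simp only [swap1]
    rw [Finset.sum_comm]
    refine Finset.sum_congr rfl fun z _ => ?_
    rw [Finset.sum_mul_sum]
  rw [step2]
  have step3 : ∀ z : GaloisField 2 n,
      (∑ v : GaloisField 2 n,
        (∑ x : GaloisField 2 n, ch n (v * (F x + u * x))) * ch n (v * (F z + u * z)))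
      = (2:ℤ)^n * (Nc n F u (F z + u * z) : ℤ) := fun z => Hval n hn F u _
  simp only [step3]
  have step4 : ∀ z : GaloisField 2 n,
      ((2:ℤ)^n * (Nc n F u (F z + u * z) : ℤ)) * ((2:ℤ)^n * (Nc n F u (F z + u * z) : ℤ))
      = ((2:ℤ)^n)^2 * ((Nc n F u (F z + u * z) : ℤ)^2) := by
    intro z; ring
  simp only [step4]
  rw [← Finset.mul_sum]
  have := fiber n F u (fun a => (Nc n F u a : ℤ)^2)
  rw [this]
  congr 1
  refine Finset.sum_congr rfl fun a _ => ?_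
  ring

lemma Nc_cast_sum (n : ℕ) (F : GaloisField 2 n → GaloisField 2 n) (u a : GaloisField 2 n) :
    (Nc n F u a : ℤ) = ∑ y : GaloisField 2 n, if F y + u * y = a then (1:ℤ) else 0 := by
  rw [Nc, Finset.card_filter]
  push_cast
  rfl

lemma count_u (n : ℕ) (hn : n ≠ 0) (c d : GaloisField 2 n) :
    (∑ u : GaloisField 2 n, if u * c = d then (1:ℤ) else 0)
      = if c = 0 then (if d = 0 then (2:ℤ)^n else 0) else 1 := by
  by_cases hc : c = 0
  · subst hc
    simp only [mul_zero, if_pos, eq_comm (a := (0 : GaloisField 2 n))]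
    by_cases hd : d = 0
    · simp only [hd, if_pos rfl, Finset.sum_const, card_univ, ← Nat.card_eq_fintype_card,
        GaloisField.card 2 n hn, nsmul_eq_mul]
      norm_num
    · simp [hd]
  · have heq : ∀ u : GaloisField 2 n, (u * c = d) ↔ (u = d * c⁻¹) := by
      intro u
      exact (eq_mul_inv_iff_mul_eq₀ hc).symm
    simp only [heq, hc, if_false]
    rw [Finset.sum_ite_eq' univ (d * c⁻¹) (fun _ => (1:ℤ))]
    simp

lemma I4 (n : ℕ) (hn : n ≠ 0) (F : GaloisField 2 n → GaloisField 2 n) :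
    ∑ u : GaloisField 2 n, ∑ a : GaloisField 2 n, (Nc n F u a : ℤ)^2
      = 2 * ((2:ℤ)^n)^2 - 2^n := by
  have h1 : ∀ u : GaloisField 2 n, ∑ a : GaloisField 2 n, (Nc n F u a : ℤ)^2
      = ∑ x : GaloisField 2 n, (Nc n F u (F x + u * x) : ℤ) := by
    intro u
    rw [fiber n F u (fun a => (Nc n F u a : ℤ))]
    refine Finset.sum_congr rfl fun a _ => ?_
    ring
  simp only [h1]
  rw [Finset.sum_comm]
  have h2 : ∀ x : GaloisField 2 n,
      (∑ u : GaloisField 2 n, (Nc n F u (F x + u * x) : ℤ)) = 2 * (2:ℤ)^n - 1 := by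
    intro x
    have h3 : ∀ u : GaloisField 2 n, (Nc n F u (F x + u * x) : ℤ)
        = ∑ y : GaloisField 2 n, if u * (y + x) = F x + F y then (1:ℤ) else 0 := by
      intro u
      rw [Nc_cast_sum]
      refine Finset.sum_congr rfl fun y _ => ?_
      have hcond : (F y + u * y = F x + u * x) ↔ (u * (y + x) = F x + F y) := by
        rw [← addeq (F y + u * y) (F x + u * x), ← addeq (u * (y + x)) (F x + F y),
          show u * (y + x) + (F x + F y) = F y + u * y + (F x + u * x) by ring]
      exact if_congr hcond rfl rfl
    simp only [h3]
    rw [Finset.sum_comm]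
    have h4 : ∀ y : GaloisField 2 n,
        (∑ u : GaloisField 2 n, if u * (y + x) = F x + F y then (1:ℤ) else 0)
        = if y = x then (2:ℤ)^n else 1 := by
      intro y
      rw [count_u n hn]
      by_cases hyx : y = x
      · subst hyx
        simp [CharTwo.add_self_eq_zero]
      · have : y + x ≠ 0 := fun h => hyx (addeq y x |>.mp h)
        simp [this, hyx]
    simp only [h4]
    have h5 : ∀ y : GaloisField 2 n, (if y = x then (2:ℤ)^n else 1)
        = 1 + (if y = x then (2:ℤ)^n - 1 else 0) := by
      intro y; split_ifs <;> ring
    simp only [h5]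
    rw [Finset.sum_add_distrib, Finset.sum_ite_eq' univ x (fun _ => (2:ℤ)^n - 1),
      Finset.sum_const, card_univ, ← Nat.card_eq_fintype_card, GaloisField.card 2 n hn]
    simp
    ring
  simp only [h2]
  rw [Finset.sum_const, card_univ, ← Nat.card_eq_fintype_card, GaloisField.card 2 n hn,
    nsmul_eq_mul]
  push_cast
  ring

lemma W0_eq (n : ℕ) (F : GaloisField 2 n → GaloisField 2 n) (v : GaloisField 2 n) :
    W n F 0 v = ∑ x : GaloisField 2 n, ch n (v * (F x + 0 * x)) := by
  unfold W ch
  refine Finset.sum_congr rfl fun x _ => ?_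
  rw [zero_mul, add_zero]
  congr 1
  unfold tr
  rw [map_zero, add_zero]

lemma W00 (n : ℕ) (hn : n ≠ 0) (F : GaloisField 2 n → GaloisField 2 n) :
    W n F 0 0 = (2:ℤ)^n := by
  rw [W0_eq]
  have : ∀ x : GaloisField 2 n, ch n (0 * (F x + 0 * x)) = 1 := by
    intro x; rw [zero_mul, ch_zero]
  simp only [this]
  rw [Finset.sum_const, card_univ, ← Nat.card_eq_fintype_card, GaloisField.card 2 n hn]
  simp

lemma sqsum (n : ℕ) (hn : n ≠ 0) (F : GaloisField 2 n → GaloisField 2 n) :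
    ∑ v : GaloisField 2 n, W n F 0 v ^ 2
      = (2:ℤ)^n * ∑ a : GaloisField 2 n, (Nc n F 0 a : ℤ)^2 := by
  have h1 : ∀ v : GaloisField 2 n, W n F 0 v ^ 2
      = ∑ x : GaloisField 2 n,
          (∑ y : GaloisField 2 n, ch n (v * (F y + 0 * y))) * ch n (v * (F x + 0 * x)) := by
    intro v
    rw [W0_eq, sq, Finset.mul_sum]
  simp only [h1]
  rw [Finset.sum_comm]
  have h2 : ∀ x : GaloisField 2 n,
      (∑ v : GaloisField 2 n,
        (∑ y : GaloisField 2 n, ch n (v * (F y + 0 * y))) * ch n (v * (F x + 0 * x)))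
      = (2:ℤ)^n * (Nc n F 0 (F x + 0 * x) : ℤ) := fun x => Hval n hn F 0 _
  simp only [h2]
  rw [← Finset.mul_sum, fiber n F 0 (fun a => (Nc n F 0 a : ℤ))]
  congr 1
  refine Finset.sum_congr rfl fun a _ => ?_
  ring

lemma factor3 (n : ℕ) (f g h : GaloisField 2 n → ℤ) :
    ∑ x : GaloisField 2 n × GaloisField 2 n × GaloisField 2 n, f x.1 * g x.2.1 * h x.2.2
      = (∑ a : GaloisField 2 n, f a) * (∑ a : GaloisField 2 n, g a) *
        (∑ a : GaloisField 2 n, h a) := by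
  rw [Fintype.sum_prod_type]
  simp only [Fintype.sum_prod_type]
  symm
  rw [Finset.sum_mul_sum, Finset.sum_mul]
  refine Finset.sum_congr rfl fun a _ => ?_
  rw [Finset.sum_mul]
  refine Finset.sum_congr rfl fun b _ => ?_
  rw [Finset.mul_sum]

lemma I1 (n : ℕ) (hn : n ≠ 0) (F : GaloisField 2 n → GaloisField 2 n) :
    (2:ℤ)^n * (∑ v₁ : GaloisField 2 n, ∑ v₂ : GaloisField 2 n,
        ∑ x ∈ (univ : Finset (GaloisField 2 n × GaloisField 2 n × GaloisField 2 n)).filter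
            (fun x => v₁ * x.1 + v₂ * x.2.1 + (v₁ + v₂) * x.2.2 = 0),
          ch n (v₁ * F x.1 + v₂ * F x.2.1 + (v₁ + v₂) * F x.2.2))
      = ∑ u : GaloisField 2 n, ∑ v₁ : GaloisField 2 n, ∑ v₂ : GaloisField 2 n,
          (∑ x : GaloisField 2 n, ch n (v₁ * (F x + u * x))) *
          (∑ x : GaloisField 2 n, ch n (v₂ * (F x + u * x))) *
          (∑ x : GaloisField 2 n, ch n ((v₁ + v₂) * (F x + u * x))) := by
  have main : ∀ v₁ v₂ : GaloisField 2 n,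
      (2:ℤ)^n * (∑ x ∈ (univ : Finset (GaloisField 2 n × GaloisField 2 n × GaloisField 2 n)).filter
            (fun x => v₁ * x.1 + v₂ * x.2.1 + (v₁ + v₂) * x.2.2 = 0),
          ch n (v₁ * F x.1 + v₂ * F x.2.1 + (v₁ + v₂) * F x.2.2))
      = ∑ u : GaloisField 2 n,
          (∑ x : GaloisField 2 n, ch n (v₁ * (F x + u * x))) *
          (∑ x : GaloisField 2 n, ch n (v₂ * (F x + u * x))) *
          (∑ x : GaloisField 2 n, ch n ((v₁ + v₂) * (F x + u * x))) := by
    intro v₁ v₂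
    rw [Finset.sum_filter, Finset.mul_sum]
    have e1 : ∀ x : GaloisField 2 n × GaloisField 2 n × GaloisField 2 n,
        (2:ℤ)^n * (if v₁ * x.1 + v₂ * x.2.1 + (v₁ + v₂) * x.2.2 = 0 then
            ch n (v₁ * F x.1 + v₂ * F x.2.1 + (v₁ + v₂) * F x.2.2) else 0)
        = ∑ u : GaloisField 2 n,
            ch n (v₁ * (F x.1 + u * x.1)) * ch n (v₂ * (F x.2.1 + u * x.2.1)) *
            ch n ((v₁ + v₂) * (F x.2.2 + u * x.2.2)) := by
      intro x
      have e2 : (2:ℤ)^n * (if v₁ * x.1 + v₂ * x.2.1 + (v₁ + v₂) * x.2.2 = 0 then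
            ch n (v₁ * F x.1 + v₂ * F x.2.1 + (v₁ + v₂) * F x.2.2) else 0)
          = (∑ u : GaloisField 2 n, ch n (u * (v₁ * x.1 + v₂ * x.2.1 + (v₁ + v₂) * x.2.2))) *
            ch n (v₁ * F x.1 + v₂ * F x.2.1 + (v₁ + v₂) * F x.2.2) := by
        rw [ortho n hn]
        split_ifs <;> ring
      rw [e2, Finset.sum_mul]
      refine Finset.sum_congr rfl fun u _ => ?_
      rw [← ch_add,
        show u * (v₁ * x.1 + v₂ * x.2.1 + (v₁ + v₂) * x.2.2)
            + (v₁ * F x.1 + v₂ * F x.2.1 + (v₁ + v₂) * F x.2.2)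
          = v₁ * (F x.1 + u * x.1) + (v₂ * (F x.2.1 + u * x.2.1)
            + (v₁ + v₂) * (F x.2.2 + u * x.2.2)) by ring,
        ch_add, ch_add, ← mul_assoc]
    simp only [e1]
    rw [Finset.sum_comm]
    refine Finset.sum_congr rfl fun u _ => ?_
    exact factor3 n (fun a => ch n (v₁ * (F a + u * a))) (fun a => ch n (v₂ * (F a + u * a)))
      (fun a => ch n ((v₁ + v₂) * (F a + u * a)))
  rw [Finset.mul_sum]
  have : ∀ v₁ : GaloisField 2 n, (2:ℤ)^n * (∑ v₂ : GaloisField 2 n,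
      ∑ x ∈ (univ : Finset (GaloisField 2 n × GaloisField 2 n × GaloisField 2 n)).filter
          (fun x => v₁ * x.1 + v₂ * x.2.1 + (v₁ + v₂) * x.2.2 = 0),
        ch n (v₁ * F x.1 + v₂ * F x.2.1 + (v₁ + v₂) * F x.2.2))
      = ∑ v₂ : GaloisField 2 n, ∑ u : GaloisField 2 n,
          (∑ x : GaloisField 2 n, ch n (v₁ * (F x + u * x))) *
          (∑ x : GaloisField 2 n, ch n (v₂ * (F x + u * x))) *
          (∑ x : GaloisField 2 n, ch n ((v₁ + v₂) * (F x + u * x))) := by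
    intro v₁
    rw [Finset.mul_sum]
    exact Finset.sum_congr rfl fun v₂ _ => main v₁ v₂
  simp only [this]
  have swap : ∀ v₁ : GaloisField 2 n,
      (∑ v₂ : GaloisField 2 n, ∑ u : GaloisField 2 n,
          (∑ x : GaloisField 2 n, ch n (v₁ * (F x + u * x))) *
          (∑ x : GaloisField 2 n, ch n (v₂ * (F x + u * x))) *
          (∑ x : GaloisField 2 n, ch n ((v₁ + v₂) * (F x + u * x))))
      = ∑ u : GaloisField 2 n, ∑ v₂ : GaloisField 2 n,
          (∑ x : GaloisField 2 n, ch n (v₁ * (F x + u * x))) *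
          (∑ x : GaloisField 2 n, ch n (v₂ * (F x + u * x))) *
          (∑ x : GaloisField 2 n, ch n ((v₁ + v₂) * (F x + u * x))) :=
    fun _ => Finset.sum_comm
  simp only [swap]
  rw [Finset.sum_comm]

lemma ch_def' (n : ℕ) (x : GaloisField 2 n) : (-1:ℤ) ^ (tr n x).val = ch n x := rfl

lemma hcard (n : ℕ) (hn : n ≠ 0) :
    (((univ : Finset (GaloisField 2 n)).erase 0).card : ℤ) = (2:ℤ)^n - 1 := by
  rw [Finset.card_erase_of_mem (mem_univ 0), card_univ, ← Nat.card_eq_fintype_card,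
    GaloisField.card 2 n hn, Nat.cast_sub Nat.one_le_two_pow]
  push_cast
  ring

lemma keyE (n : ℕ) (hn : n ≠ 0) (F : GaloisField 2 n → GaloisField 2 n) :
    (2 ^ n * (∑ v₁ : GaloisField 2 n, ∑ v₂ : GaloisField 2 n,
        ∑ x ∈ (univ : Finset (GaloisField 2 n × GaloisField 2 n × GaloisField 2 n)).filter
            (fun x => v₁ * x.1 + v₂ * x.2.1 + (v₁ + v₂) * x.2.2 = 0),
          (-1 : ℤ) ^ (tr n (v₁ * F x.1 + v₂ * F x.2.1 + (v₁ + v₂) * F x.2.2)).val)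
      - ∑ v₁ : GaloisField 2 n, ∑ v₂ : GaloisField 2 n,
          W n F 0 v₁ * W n F 0 v₂ * W n F 0 (v₁ + v₂)
      + 2 ^ (n + 2) *
          ∑ v ∈ univ.filter (fun v : GaloisField 2 n => v ≠ 0), W n F 0 v ^ 2
      - 2 ^ (4 * n + 2) + 2 ^ (3 * n + 2))
    = ((2:ℤ)^n)^2 *
        ((∑ u ∈ (univ : Finset (GaloisField 2 n)).erase 0, ∑ a : GaloisField 2 n,
            (Nc n F u a : ℤ) * ((Nc n F u a : ℤ) - 1) * ((Nc n F u a : ℤ) - 2))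
          + ∑ a : GaloisField 2 n, (Nc n F 0 a : ℤ) * ((Nc n F 0 a : ℤ) - 1)) := by
  simp only [ch_def', Finset.filter_ne']
  have p1 : (2:ℤ)^(n+2) = 4 * (2:ℤ)^n := by rw [pow_add]; ring
  have p2 : (2:ℤ)^(4*n+2) = 4 * ((2:ℤ)^n)^4 := by rw [pow_add, mul_comm 4 n, pow_mul]; ring
  have p3 : (2:ℤ)^(3*n+2) = 4 * ((2:ℤ)^n)^3 := by rw [pow_add, mul_comm 3 n, pow_mul]; ring
  rw [p1, p2, p3]
  have e1 := I1 n hn F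
  simp only [cube n hn F] at e1
  rw [← Finset.mul_sum] at e1
  have e2 : (∑ v₁ : GaloisField 2 n, ∑ v₂ : GaloisField 2 n,
      W n F 0 v₁ * W n F 0 v₂ * W n F 0 (v₁ + v₂))
      = ((2:ℤ)^n)^2 * ∑ a : GaloisField 2 n, (Nc n F 0 a : ℤ)^3 := by
    simp only [W0_eq]
    exact cube n hn F 0
  have e3 : (∑ v ∈ (univ : Finset (GaloisField 2 n)).erase 0, W n F 0 v ^ 2)
      = (2:ℤ)^n * (∑ a : GaloisField 2 n, (Nc n F 0 a : ℤ)^2) - ((2:ℤ)^n)^2 := by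
    have h := Finset.add_sum_erase univ (fun v => W n F 0 v ^ 2) (mem_univ 0)
    have h2 := sqsum n hn F
    have h3 : W n F 0 0 ^ 2 = ((2:ℤ)^n)^2 := by rw [W00 n hn F]
    linarith [h, h2, h3]
  have e4 : (∑ u : GaloisField 2 n, ∑ a : GaloisField 2 n, (Nc n F u a : ℤ)^3)
      = (∑ a : GaloisField 2 n, (Nc n F 0 a : ℤ)^3)
        + ∑ u ∈ (univ : Finset (GaloisField 2 n)).erase 0,
            ∑ a : GaloisField 2 n, (Nc n F u a : ℤ)^3 :=
    (Finset.add_sum_erase univ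
      (fun u => ∑ a : GaloisField 2 n, (Nc n F u a : ℤ)^3) (mem_univ 0)).symm
  have e5a : ∀ u : GaloisField 2 n, (∑ a : GaloisField 2 n, (Nc n F u a : ℤ)^3)
      = (∑ a : GaloisField 2 n,
          (Nc n F u a : ℤ) * ((Nc n F u a : ℤ) - 1) * ((Nc n F u a : ℤ) - 2))
        + (3 * (∑ a : GaloisField 2 n, (Nc n F u a : ℤ)^2) - 2 * (2:ℤ)^n) := by
    intro u
    have h1 := sum_Nc n hn F u
    have h2 : (∑ a : GaloisField 2 n, (Nc n F u a : ℤ)^3)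
        = ∑ a : GaloisField 2 n,
            ((Nc n F u a : ℤ) * ((Nc n F u a : ℤ) - 1) * ((Nc n F u a : ℤ) - 2)
              + (3 * (Nc n F u a : ℤ)^2 - 2 * (Nc n F u a : ℤ))) :=
      Finset.sum_congr rfl fun a _ => by ring
    rw [h2, Finset.sum_add_distrib, Finset.sum_sub_distrib, ← Finset.mul_sum, ← Finset.mul_sum,
      h1]
  have e5 : (∑ u ∈ (univ : Finset (GaloisField 2 n)).erase 0,
        ∑ a : GaloisField 2 n, (Nc n F u a : ℤ)^3)
      = (∑ u ∈ (univ : Finset (GaloisField 2 n)).erase 0, ∑ a : GaloisField 2 n,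
          (Nc n F u a : ℤ) * ((Nc n F u a : ℤ) - 1) * ((Nc n F u a : ℤ) - 2))
        + (3 * (∑ u ∈ (univ : Finset (GaloisField 2 n)).erase 0,
            ∑ a : GaloisField 2 n, (Nc n F u a : ℤ)^2)
          - 2 * (((2:ℤ)^n - 1) * (2:ℤ)^n)) := by
    simp only [e5a]
    rw [Finset.sum_add_distrib, Finset.sum_sub_distrib, ← Finset.mul_sum, Finset.sum_const,
      nsmul_eq_mul, hcard n hn]
    ring
  have e6 : (∑ u ∈ (univ : Finset (GaloisField 2 n)).erase 0,
        ∑ a : GaloisField 2 n, (Nc n F u a : ℤ)^2)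
      = (2 * ((2:ℤ)^n)^2 - (2:ℤ)^n) - ∑ a : GaloisField 2 n, (Nc n F 0 a : ℤ)^2 := by
    have h := Finset.add_sum_erase univ
      (fun u => ∑ a : GaloisField 2 n, (Nc n F u a : ℤ)^2) (mem_univ 0)
    have h2 := I4 n hn F
    linarith [h, h2]
  have e7 : (∑ a : GaloisField 2 n, (Nc n F 0 a : ℤ) * ((Nc n F 0 a : ℤ) - 1))
      = (∑ a : GaloisField 2 n, (Nc n F 0 a : ℤ)^2) - (2:ℤ)^n := by
    have h1 := sum_Nc n hn F 0
    have h2 : (∑ a : GaloisField 2 n, (Nc n F 0 a : ℤ) * ((Nc n F 0 a : ℤ) - 1))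
        = ∑ a : GaloisField 2 n, ((Nc n F 0 a : ℤ)^2 - (Nc n F 0 a : ℤ)) :=
      Finset.sum_congr rfl fun a _ => by ring
    rw [h2, Finset.sum_sub_distrib, h1]
  linear_combination e1 - e2 + (4*(2:ℤ)^n)*e3 + ((2:ℤ)^n)^2*e4 + ((2:ℤ)^n)^2*e5
    + 3*((2:ℤ)^n)^2*e6 - ((2:ℤ)^n)^2*e7

lemma card_eq (n : ℕ) (F : GaloisField 2 n → GaloisField 2 n) (b a : GaloisField 2 n) :
    Nat.card {x : GaloisField 2 n // F x + b * x = a} = Nc n F b a := by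
  rw [Nat.card_eq_fintype_card, Fintype.card_subtype, Nc]

lemma t3nn (m : ℕ) : 0 ≤ (m:ℤ) * ((m:ℤ) - 1) * ((m:ℤ) - 2) := by
  match m with
  | 0 => norm_num
  | 1 => norm_num
  | 2 => norm_num
  | (k+3) =>
    have h : (3:ℤ) ≤ ((k+3 : ℕ) : ℤ) := by push_cast; linarith
    have p1 : (0:ℤ) < ((k+3 : ℕ) : ℤ) := by linarith
    have p2 : (0:ℤ) < ((k+3 : ℕ) : ℤ) - 1 := by linarith
    have p3 : (0:ℤ) < ((k+3 : ℕ) : ℤ) - 2 := by linarith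
    have := mul_pos (mul_pos p1 p2) p3
    linarith

lemma t3zero {m : ℕ} (h : (m:ℤ) * ((m:ℤ) - 1) * ((m:ℤ) - 2) = 0) : m ≤ 2 := by
  by_contra hc
  push_neg at hc
  have h3 : (3:ℤ) ≤ (m:ℤ) := by exact_mod_cast hc
  have p1 : (0:ℤ) < (m:ℤ) := by linarith
  have p2 : (0:ℤ) < (m:ℤ) - 1 := by linarith
  have p3 : (0:ℤ) < (m:ℤ) - 2 := by linarith
  have := mul_pos (mul_pos p1 p2) p3
  linarith

lemma t2nn (m : ℕ) : 0 ≤ (m:ℤ) * ((m:ℤ) - 1) := by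
  match m with
  | 0 => norm_num
  | (k+1) =>
    have h : (1:ℤ) ≤ ((k+1 : ℕ) : ℤ) := by push_cast; linarith
    have p1 : (0:ℤ) < ((k+1 : ℕ) : ℤ) := by linarith
    have p2 : (0:ℤ) ≤ ((k+1 : ℕ) : ℤ) - 1 := by linarith
    have := mul_nonneg p1.le p2
    linarith

lemma t2zero {m : ℕ} (h : (m:ℤ) * ((m:ℤ) - 1) = 0) : m ≤ 1 := by
  by_contra hc
  push_neg at hc
  have h2 : (2:ℤ) ≤ (m:ℤ) := by exact_mod_cast hc
  have p1 : (0:ℤ) < (m:ℤ) := by linarith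
  have p2 : (0:ℤ) < (m:ℤ) - 1 := by linarith
  have := mul_pos p1 p2
  linarith

lemma Anonneg (n : ℕ) (F : GaloisField 2 n → GaloisField 2 n) :
    0 ≤ ∑ u ∈ (univ : Finset (GaloisField 2 n)).erase 0, ∑ a : GaloisField 2 n,
        (Nc n F u a : ℤ) * ((Nc n F u a : ℤ) - 1) * ((Nc n F u a : ℤ) - 2) :=
  Finset.sum_nonneg fun u _ => Finset.sum_nonneg fun a _ => t3nn _

lemma Qnonneg (n : ℕ) (F : GaloisField 2 n → GaloisField 2 n) :
    0 ≤ ∑ a : GaloisField 2 n, (Nc n F 0 a : ℤ) * ((Nc n F 0 a : ℤ) - 1) :=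
  Finset.sum_nonneg fun a _ => t2nn _

lemma equiv_opoly (n : ℕ) (hn : n ≠ 0) (F : GaloisField 2 n → GaloisField 2 n) :
    ((∑ u ∈ (univ : Finset (GaloisField 2 n)).erase 0, ∑ a : GaloisField 2 n,
        (Nc n F u a : ℤ) * ((Nc n F u a : ℤ) - 1) * ((Nc n F u a : ℤ) - 2))
      + ∑ a : GaloisField 2 n, (Nc n F 0 a : ℤ) * ((Nc n F 0 a : ℤ) - 1)) = 0
    ↔ IsOPoly n F := by
  constructor
  · intro h0
    have hA := Anonneg n F
    have hQ := Qnonneg n F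
    have hA0 : (∑ u ∈ (univ : Finset (GaloisField 2 n)).erase 0, ∑ a : GaloisField 2 n,
        (Nc n F u a : ℤ) * ((Nc n F u a : ℤ) - 1) * ((Nc n F u a : ℤ) - 2)) = 0 := by linarith
    have hQ0 : (∑ a : GaloisField 2 n, (Nc n F 0 a : ℤ) * ((Nc n F 0 a : ℤ) - 1)) = 0 := by
      linarith
    -- termwise zero
    have hAterm : ∀ u ∈ (univ : Finset (GaloisField 2 n)).erase 0, ∀ a : GaloisField 2 n,
        Nc n F u a ≤ 2 := by
      intro u hu a
      have h1 := (Finset.sum_eq_zero_iff_of_nonneg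
        (fun u _ => Finset.sum_nonneg fun a _ => t3nn (Nc n F u a))).mp hA0 u hu
      have h2 := (Finset.sum_eq_zero_iff_of_nonneg
        (fun a _ => t3nn (Nc n F u a))).mp h1 a (mem_univ a)
      exact t3zero h2
    have hQterm : ∀ a : GaloisField 2 n, Nc n F 0 a ≤ 1 := by
      intro a
      exact t2zero ((Finset.sum_eq_zero_iff_of_nonneg
        (fun a _ => t2nn (Nc n F 0 a))).mp hQ0 a (mem_univ a))
    -- S0 = q
    have hS0 : (∑ a : GaloisField 2 n, (Nc n F 0 a : ℤ)^2) = (2:ℤ)^n := by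
      have h1 : (∑ a : GaloisField 2 n, (Nc n F 0 a : ℤ)^2)
          = ∑ a : GaloisField 2 n, (Nc n F 0 a : ℤ) := by
        refine Finset.sum_congr rfl fun a _ => ?_
        rcases Nat.le_one_iff_eq_zero_or_eq_one.mp (hQterm a) with h | h <;> rw [h] <;> norm_num
      rw [h1, sum_Nc n hn F 0]
    -- sum of squares over nonzero u
    have hE2 : (∑ u ∈ (univ : Finset (GaloisField 2 n)).erase 0,
        ∑ a : GaloisField 2 n, (Nc n F u a : ℤ)^2) = 2 * ((2:ℤ)^n)^2 - 2 * (2:ℤ)^n := by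
      have h := Finset.add_sum_erase univ
        (fun u => ∑ a : GaloisField 2 n, (Nc n F u a : ℤ)^2) (mem_univ 0)
      have h2 := I4 n hn F
      linarith [h, h2, hS0]
    -- each u : sum of squares = 2q
    have hperu : ∀ u ∈ (univ : Finset (GaloisField 2 n)).erase 0,
        (∑ a : GaloisField 2 n, (Nc n F u a : ℤ)^2) = 2 * (2:ℤ)^n := by
      have hle : ∀ u ∈ (univ : Finset (GaloisField 2 n)).erase 0,
          (∑ a : GaloisField 2 n, (Nc n F u a : ℤ)^2) ≤ 2 * (2:ℤ)^n := by
        intro u hu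
        have h1 : (∑ a : GaloisField 2 n, (Nc n F u a : ℤ)^2)
            ≤ ∑ a : GaloisField 2 n, 2 * (Nc n F u a : ℤ) := by
          refine Finset.sum_le_sum fun a _ => ?_
          have h2 : (Nc n F u a : ℤ) ≤ 2 := by exact_mod_cast hAterm u hu a
          have h3 : (0:ℤ) ≤ (Nc n F u a : ℤ) := Int.natCast_nonneg _
          nlinarith
        rw [← Finset.mul_sum, sum_Nc n hn F u] at h1
        exact h1
      intro u hu
      by_contra hne
      have hlt : (∑ a : GaloisField 2 n, (Nc n F u a : ℤ)^2) < 2 * (2:ℤ)^n :=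
        lt_of_le_of_ne (hle u hu) hne
      have htot : (∑ u ∈ (univ : Finset (GaloisField 2 n)).erase 0,
          ∑ a : GaloisField 2 n, (Nc n F u a : ℤ)^2)
          < ∑ u ∈ (univ : Finset (GaloisField 2 n)).erase 0, 2 * (2:ℤ)^n :=
        Finset.sum_lt_sum hle ⟨u, hu, hlt⟩
      rw [Finset.sum_const, nsmul_eq_mul, hcard n hn, hE2] at htot
      nlinarith [htot]
    -- termwise : Nc = 0 or 2
    intro b hb a
    have hbmem : b ∈ (univ : Finset (GaloisField 2 n)).erase 0 :=
      Finset.mem_erase.mpr ⟨hb, mem_univ b⟩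
    have hsq : ∀ a : GaloisField 2 n, (Nc n F b a : ℤ)^2 = 2 * (Nc n F b a : ℤ) := by
      have hle2 : ∀ a ∈ (univ : Finset (GaloisField 2 n)),
          (Nc n F b a : ℤ)^2 ≤ 2 * (Nc n F b a : ℤ) := by
        intro a _
        have h2 : (Nc n F b a : ℤ) ≤ 2 := by exact_mod_cast hAterm b hbmem a
        have h3 : (0:ℤ) ≤ (Nc n F b a : ℤ) := Int.natCast_nonneg _
        nlinarith
      intro a'
      by_contra hne
      have hlt : (Nc n F b a' : ℤ)^2 < 2 * (Nc n F b a' : ℤ) :=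
        lt_of_le_of_ne (hle2 a' (mem_univ a')) hne
      have htot : (∑ a : GaloisField 2 n, (Nc n F b a : ℤ)^2)
          < ∑ a : GaloisField 2 n, 2 * (Nc n F b a : ℤ) :=
        Finset.sum_lt_sum hle2 ⟨a', mem_univ a', hlt⟩
      rw [← Finset.mul_sum, sum_Nc n hn F b, hperu b hbmem] at htot
      exact lt_irrefl _ htot
    have := hsq a
    have hcases : Nc n F b a = 0 ∨ Nc n F b a = 2 := by
      have h2 : ((Nc n F b a : ℤ)) * ((Nc n F b a : ℤ) - 2) = 0 := by nlinarith [this]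
      rcases mul_eq_zero.mp h2 with h | h
      · left; exact_mod_cast h
      · right
        have : (Nc n F b a : ℤ) = 2 := by linarith
        exact_mod_cast this
    rw [card_eq]
    exact hcases
  · intro hop
    have hNc : ∀ b : GaloisField 2 n, b ≠ 0 → ∀ a : GaloisField 2 n,
        Nc n F b a = 0 ∨ Nc n F b a = 2 := by
      intro b hb a
      have := hop b hb a
      rwa [card_eq] at this
    have hA0 : (∑ u ∈ (univ : Finset (GaloisField 2 n)).erase 0, ∑ a : GaloisField 2 n,
        (Nc n F u a : ℤ) * ((Nc n F u a : ℤ) - 1) * ((Nc n F u a : ℤ) - 2)) = 0 := by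
      refine Finset.sum_eq_zero fun u hu => Finset.sum_eq_zero fun a _ => ?_
      rcases hNc u (Finset.mem_erase.mp hu).1 a with h | h <;> rw [h] <;> norm_num
    have hperu : ∀ u ∈ (univ : Finset (GaloisField 2 n)).erase 0,
        (∑ a : GaloisField 2 n, (Nc n F u a : ℤ)^2) = 2 * (2:ℤ)^n := by
      intro u hu
      have h1 : (∑ a : GaloisField 2 n, (Nc n F u a : ℤ)^2)
          = ∑ a : GaloisField 2 n, 2 * (Nc n F u a : ℤ) := by
        refine Finset.sum_congr rfl fun a _ => ?_
        rcases hNc u (Finset.mem_erase.mp hu).1 a with h | h <;> rw [h] <;> norm_num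
      rw [h1, ← Finset.mul_sum, sum_Nc n hn F u]
    have hE2 : (∑ u ∈ (univ : Finset (GaloisField 2 n)).erase 0,
        ∑ a : GaloisField 2 n, (Nc n F u a : ℤ)^2)
        = 2 * ((2:ℤ)^n)^2 - 2 * (2:ℤ)^n := by
      rw [Finset.sum_congr rfl hperu, Finset.sum_const, nsmul_eq_mul, hcard n hn]
      ring
    have hS0 : (∑ a : GaloisField 2 n, (Nc n F 0 a : ℤ)^2) = (2:ℤ)^n := by
      have h := Finset.add_sum_erase univ
        (fun u => ∑ a : GaloisField 2 n, (Nc n F u a : ℤ)^2) (mem_univ 0)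
      have h2 := I4 n hn F
      linarith [h, h2, hE2]
    have hQ0 : (∑ a : GaloisField 2 n, (Nc n F 0 a : ℤ) * ((Nc n F 0 a : ℤ) - 1)) = 0 := by
      have h2 : (∑ a : GaloisField 2 n, (Nc n F 0 a : ℤ) * ((Nc n F 0 a : ℤ) - 1))
          = ∑ a : GaloisField 2 n, ((Nc n F 0 a : ℤ)^2 - (Nc n F 0 a : ℤ)) :=
        Finset.sum_congr rfl fun a _ => by ring
      rw [h2, Finset.sum_sub_distrib, sum_Nc n hn F 0, hS0]
      ring
    rw [hA0, hQ0]
    ring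

theorem o_polynomial_characterization_corollary (n : ℕ) (hn : 0 < n)
    (F : GaloisField 2 n → GaloisField 2 n) :
    (2 ^ n * (∑ v₁ : GaloisField 2 n, ∑ v₂ : GaloisField 2 n,
        ∑ x ∈ (univ : Finset (GaloisField 2 n × GaloisField 2 n × GaloisField 2 n)).filter
            (fun x => v₁ * x.1 + v₂ * x.2.1 + (v₁ + v₂) * x.2.2 = 0),
          (-1 : ℤ) ^ (tr n (v₁ * F x.1 + v₂ * F x.2.1 + (v₁ + v₂) * F x.2.2)).val)
      - ∑ v₁ : GaloisField 2 n, ∑ v₂ : GaloisField 2 n,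
          W n F 0 v₁ * W n F 0 v₂ * W n F 0 (v₁ + v₂)
      + 2 ^ (n + 2) *
          ∑ v ∈ univ.filter (fun v : GaloisField 2 n => v ≠ 0), W n F 0 v ^ 2
      - 2 ^ (4 * n + 2) + 2 ^ (3 * n + 2) ≥ 0) ∧
    (2 ^ n * (∑ v₁ : GaloisField 2 n, ∑ v₂ : GaloisField 2 n,
        ∑ x ∈ (univ : Finset (GaloisField 2 n × GaloisField 2 n × GaloisField 2 n)).filter
            (fun x => v₁ * x.1 + v₂ * x.2.1 + (v₁ + v₂) * x.2.2 = 0),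
          (-1 : ℤ) ^ (tr n (v₁ * F x.1 + v₂ * F x.2.1 + (v₁ + v₂) * F x.2.2)).val)
      - ∑ v₁ : GaloisField 2 n, ∑ v₂ : GaloisField 2 n,
          W n F 0 v₁ * W n F 0 v₂ * W n F 0 (v₁ + v₂)
      + 2 ^ (n + 2) *
          ∑ v ∈ univ.filter (fun v : GaloisField 2 n => v ≠ 0), W n F 0 v ^ 2
      - 2 ^ (4 * n + 2) + 2 ^ (3 * n + 2) = 0 ↔ IsOPoly n F) := by
  have hn' : n ≠ 0 := hn.ne'
  rw [keyE n hn' F]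
  constructor
  · exact mul_nonneg (by positivity) (add_nonneg (Anonneg n F) (Qnonneg n F))
  · have hq : (((2:ℤ)^n)^2) ≠ 0 := by positivity
    rw [mul_eq_zero, or_iff_right hq]
    exact equiv_opoly n hn' F
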